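/- Let ⋁_{i=1}^m 𝕊¹_{n_i}, with each n_i ≥ 2, be the wedge of m finite models of the circle, formed by identifying the points y_0 of all factors to a single point y_0. Then cat(⋁_{i=1}^m 𝕊¹_{n_i}) ≤ 2; explicitly, the minimal open neighbourhood of the wedge point y_0 and the complement of the set of wedge-point representatives {y_0} form an open cover by two sets whose inclusions are nullhomotopic. -/

import Mathlib

open Set

/-- `X` is covered by `k` open sets, each of whose inclusion maps into `X` is
nullhomotopic. -/
def CatCover (X : Type*) [TopologicalSpace X] (k : ℕ) : Prop :=
  ∃ U : Fin k → Set X,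
    (∀ i, IsOpen (U i)) ∧ (⋃ i, U i) = Set.univ ∧
    ∀ i, ContinuousMap.Nullhomotopic (⟨Subtype.val, continuous_subtype_val⟩ : C(U i, X))

/-- The (unreduced) Lusternik–Schnirelmann category of `X`: the least number of open
sets covering `X` such that each inclusion map into `X` is nullhomotopic. -/
noncomputable def lsCat (X : Type*) [TopologicalSpace X] : ℕ := sInf {k | CatCover X k}
/-- The underlying set of the finite model `𝕊¹_n` of the circle (`2n` points):
`Sum.inl i` is `x_i` and `Sum.inr i` is `y_i`. -/
def SCirc (n : ℕ) : Type := Fin n ⊕ Fin n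

namespace SCirc

/-- The minimal point `x_i` of `𝕊¹_n`. -/
def x {n : ℕ} (i : Fin n) : SCirc n := Sum.inl i

/-- The maximal point `y_i` of `𝕊¹_n`. -/
def y {n : ℕ} (i : Fin n) : SCirc n := Sum.inr i

/-- The partial order on `𝕊¹_n` generated by `x_i < y_i` and `x_{(i-1) mod n} < y_i`. -/
def le {n : ℕ} : SCirc n → SCirc n → Prop
  | Sum.inl i, Sum.inl j => i = j
  | Sum.inr i, Sum.inr j => i = j
  | Sum.inl i, Sum.inr j => i = j ∨ (i : ℕ) = ((j : ℕ) + n - 1) % n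
  | Sum.inr _, Sum.inl _ => False

/-- The Alexandrov topology on `𝕊¹_n`: open sets are down-sets.  The minimal open
neighbourhoods are `x_i^↓ = {x_i}` and `y_i^↓ = {y_i, x_i, x_{(i-1) mod n}}`. -/
instance (n : ℕ) : TopologicalSpace (SCirc n) where
  IsOpen U := ∀ a ∈ U, ∀ b, SCirc.le b a → b ∈ U
  isOpen_univ := fun _ _ _ _ => trivial
  isOpen_inter := fun _ _ hU hV a ha b hba => ⟨hU a ha.1 b hba, hV a ha.2 b hba⟩
  isOpen_sUnion := fun S hS a ha b hba => by
    obtain ⟨U, hUS, haU⟩ := ha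
    exact ⟨U, hUS, hS U hUS a haU b hba⟩

end SCirc
/-- `a` is the distinguished point `y_0` of `𝕊¹_k`. -/
def IsBasePt {k : ℕ} (a : SCirc k) : Prop := ∃ j : Fin k, a = SCirc.y j ∧ (j : ℕ) = 0

/-- The relation identifying the points `y_0` of all the circles `𝕊¹_{f i}`. -/
def wedgeRel (m : ℕ) (f : Fin m → ℕ) (a b : Σ i : Fin m, SCirc (f i)) : Prop :=
  a = b ∨ (IsBasePt a.2 ∧ IsBasePt b.2)

/-- The wedge `⋁_{i} 𝕊¹_{f i}`: the quotient of the disjoint union of the finite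
models `𝕊¹_{f i}` identifying the points `y_0` of all factors to a single point,
with the quotient topology. -/
abbrev WedgeSCirc (m : ℕ) (f : Fin m → ℕ) : Type := Quot (wedgeRel m f)

section Aux
open unitInterval

/-- If `f x` specializes to `g x` for every `x`, then `f` and `g` are homotopic. -/
theorem homotopic_of_specializes {X Y : Type*} [TopologicalSpace X] [TopologicalSpace Y]
    (f g : C(X, Y)) (h : ∀ x, f x ⤳ g x) : f.Homotopic g := by
  refine ⟨{ toFun := fun q => if q.1 = 1 then g q.2 else f q.2,
            continuous_toFun := ?_,
            map_zero_left := fun x => if_neg (fun h0 => by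
              have := congrArg Subtype.val h0; norm_num at this),
            map_one_left := fun x => if_pos rfl }⟩
  rw [continuous_def]
  intro U hU
  have hpre : (fun q : I × X => if q.1 = 1 then g q.2 else f q.2) ⁻¹' U
      = (({(1:I)}ᶜ : Set I) ×ˢ (f ⁻¹' U)) ∪ ((Set.univ : Set I) ×ˢ (g ⁻¹' U)) := by
    ext ⟨t, x⟩
    by_cases ht : t = 1
    · simp [ht]
    · simp only [Set.mem_preimage, Set.mem_union, Set.mem_prod, Set.mem_compl_iff,
        Set.mem_singleton_iff, Set.mem_univ, true_and, if_neg ht]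
      constructor
      · intro hfx; exact Or.inl ⟨ht, hfx⟩
      · rintro (⟨-, hfx⟩ | hgx)
        · exact hfx
        · exact (h x).mem_open hU hgx
  rw [hpre]
  exact ((isOpen_compl_singleton).prod (hU.preimage f.continuous)).union
    (isOpen_univ.prod (hU.preimage g.continuous))

end Aux
namespace SCirc

theorem le_refl {n : ℕ} (a : SCirc n) : SCirc.le a a := by
  cases a <;> simp [SCirc.le]

theorem eq_of_le_inr {n : ℕ} {j : Fin n} {a : SCirc n} (h : SCirc.le (Sum.inr j) a) :
    a = Sum.inr j := by
  cases a with
  | inl i => exact absurd h (by simp [SCirc.le])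
  | inr i => simp only [SCirc.le] at h; rw [h]

/-- The point of fence-index `v`: `x_{v/2}` for even `v`, `y_{(v+1)/2}` for odd `v`. -/
def pt {n : ℕ} (hn : 0 < n) (v : ℕ) : SCirc n :=
  if v % 2 = 0 then Sum.inl ⟨v / 2 % n, Nat.mod_lt _ hn⟩
  else Sum.inr ⟨(v + 1) / 2 % n, Nat.mod_lt _ hn⟩

theorem pt_even {n : ℕ} (hn : 0 < n) {v : ℕ} (h : v % 2 = 0) :
    pt hn v = SCirc.x ⟨v / 2 % n, Nat.mod_lt _ hn⟩ := if_pos h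

theorem pt_odd {n : ℕ} (hn : 0 < n) {v : ℕ} (h : ¬v % 2 = 0) :
    pt hn v = SCirc.y ⟨(v + 1) / 2 % n, Nat.mod_lt _ hn⟩ := if_neg h

/-- The fence index of a (non-base) point. -/
def idx {n : ℕ} : SCirc n → ℕ
  | Sum.inl j => 2 * (j : ℕ)
  | Sum.inr j => 2 * (j : ℕ) - 1

theorem not_isBasePt_iff {n : ℕ} (a : SCirc n) :
    ¬IsBasePt a ↔ ∀ j : Fin n, a = Sum.inr j → (j : ℕ) ≠ 0 := by
  constructor
  · rintro h j rfl hj; exact h ⟨j, rfl, hj⟩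
  · rintro h ⟨j, rfl, hj⟩; exact h j rfl hj

theorem pt_idx {n : ℕ} (hn : 0 < n) {a : SCirc n} (ha : ¬IsBasePt a) :
    pt hn (idx a) = a := by
  rw [not_isBasePt_iff] at ha
  cases a with
  | inl j =>
    have : (2 * (j : ℕ)) % 2 = 0 := by omega
    refine (pt_even hn (v := 2 * (j:ℕ)) this).trans (congrArg Sum.inl ?_)
    exact Fin.ext (by show 2 * (j:ℕ) / 2 % n = (j:ℕ); rw [Nat.mul_div_cancel_left _ (by norm_num), Nat.mod_eq_of_lt j.2])
  | inr j =>
    have hj : (j : ℕ) ≠ 0 := ha j rfl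
    have : (2 * (j : ℕ) - 1) % 2 = 1 := by omega
    refine (pt_odd hn (v := 2 * (j:ℕ) - 1) (by omega)).trans (congrArg Sum.inr ?_)
    exact Fin.ext (by
      show (2 * (j:ℕ) - 1 + 1) / 2 % n = (j:ℕ)
      rw [show 2 * (j:ℕ) - 1 + 1 = 2 * (j:ℕ) by omega,
        Nat.mul_div_cancel_left _ (by norm_num : 0 < 2), Nat.mod_eq_of_lt j.2])

theorem idx_le {n : ℕ} {a : SCirc n} (ha : ¬IsBasePt a) : idx a ≤ 2 * n - 2 := by
  rw [not_isBasePt_iff] at ha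
  cases a with
  | inl j => have := j.2; simp only [idx]; omega
  | inr j => have := j.2; have := ha j rfl; simp only [idx]; omega

theorem not_isBasePt_pt {n : ℕ} (hn : 0 < n) {v : ℕ} (hv : v ≤ 2 * n - 2) :
    ¬IsBasePt (pt hn v) := by
  rw [not_isBasePt_iff]
  intro j hj
  by_cases hodd : v % 2 = 0
  · exact absurd ((pt_even hn hodd).symm.trans hj) (by intro h; cases h)
  · have hj := (pt_odd hn hodd).symm.trans hj
    have h1 : (v + 1) / 2 < n := by omega
    injection hj with hj
    have h2 : (v + 1) / 2 % n = (j : ℕ) := congrArg Fin.val hj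
    simp only [Nat.mod_eq_of_lt h1] at h2
    omega

theorem le_pt_pt {n : ℕ} (hn : 0 < n) {v w : ℕ} (hw : w ≤ 2 * n - 2)
    (h : v = w ∨ (v % 2 = 0 ∧ (v = w + 1 ∨ w = v + 1))) :
    SCirc.le (pt hn v) (pt hn w) := by
  rcases h with rfl | ⟨hv, h⟩
  · exact le_refl _
  · have hwodd : w % 2 = 1 := by omega
    have hvlt : v ≤ 2 * n - 2 := by omega
    have hv2 : v / 2 < n := by omega
    have hw2 : (w + 1) / 2 < n := by omega
    rw [pt_even hn hv, pt_odd hn (v := w) (by omega)]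
    show _ = _ ∨ _
    rcases h with h | h
    · left
      exact Fin.ext (by simp only [Nat.mod_eq_of_lt hv2, Nat.mod_eq_of_lt hw2]; omega)
    · right
      simp only [Nat.mod_eq_of_lt hv2, Nat.mod_eq_of_lt hw2]
      have h1 : (w + 1) / 2 = v / 2 + 1 := by omega
      rw [h1, show v / 2 + 1 + n - 1 = v / 2 + n by omega, Nat.add_mod_right,
        Nat.mod_eq_of_lt hv2]

end SCirc
namespace SCirc

theorem le_cases {n : ℕ} {b a : SCirc n} (h : SCirc.le b a) (ha : ¬IsBasePt a) :
    b = a ∨ (¬IsBasePt b ∧ idx b % 2 = 0 ∧ (idx b = idx a + 1 ∨ idx a = idx b + 1)) := by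
  cases b with
  | inr j => exact Or.inl (eq_of_le_inr h).symm
  | inl i =>
    cases a with
    | inl j => exact Or.inl (by simp only [SCirc.le] at h; rw [h])
    | inr j =>
      right
      have hj : (j : ℕ) ≠ 0 := by
        exact fun h0 => ha ⟨j, rfl, h0⟩
      refine ⟨(by rintro ⟨k, hk, -⟩; cases hk), by simp [idx], ?_⟩
      simp only [SCirc.le] at h
      rcases h with h | h
      · left; simp only [idx]; have := j.2; omega
      · right
        have hjn := j.2
        have h1 : (j : ℕ) + n - 1 = ((j : ℕ) - 1) + n := by omega
        rw [h1, Nat.add_mod_right, Nat.mod_eq_of_lt (by omega)] at h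
        have := Fin.val_eq_of_eq (rfl : i = i)
        simp only [idx]
        have hi : (i : ℕ) = (j : ℕ) - 1 := h
        omega

/-- The `k`-th stage of the deformation of the punctured circle onto `x_0`:
a point of fence-index `v` is sent to the point of index `min v (2n-2-k)`. -/
def dm {n : ℕ} (k : ℕ) : SCirc n → SCirc n
  | Sum.inl j => pt (Fin.pos j) (min (2 * (j : ℕ)) (2 * n - 2 - k))
  | Sum.inr j =>
      if (j : ℕ) = 0 then Sum.inr j
      else pt (Fin.pos j) (min (2 * (j : ℕ) - 1) (2 * n - 2 - k))

theorem dm_base {n : ℕ} (k : ℕ) {a : SCirc n} (ha : IsBasePt a) : dm k a = a := by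
  obtain ⟨j, rfl, hj⟩ := ha
  exact if_pos hj

theorem dm_eq {n : ℕ} (hn : 0 < n) (k : ℕ) {a : SCirc n} (ha : ¬IsBasePt a) :
    dm k a = pt hn (min (idx a) (2 * n - 2 - k)) := by
  cases a with
  | inl j => rfl
  | inr j =>
    have hj : (j : ℕ) ≠ 0 := by exact fun h0 => ha ⟨j, rfl, h0⟩
    exact if_neg hj

theorem not_isBasePt_dm {n : ℕ} (hn : 0 < n) (k : ℕ) {a : SCirc n} (ha : ¬IsBasePt a) :
    ¬IsBasePt (dm k a) := by
  rw [dm_eq hn k ha]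
  exact not_isBasePt_pt hn (by have := idx_le ha; omega)

theorem dm_mono {n : ℕ} (hn : 0 < n) (k : ℕ) {b a : SCirc n} (ha : ¬IsBasePt a)
    (h : SCirc.le b a) : SCirc.le (dm k b) (dm k a) := by
  rcases le_cases h ha with rfl | ⟨hb, hev, hadj⟩
  · exact le_refl _
  · rw [dm_eq hn k ha, dm_eq hn k hb]
    apply le_pt_pt hn (by have := idx_le ha; omega)
    omega

theorem dm_zero {n : ℕ} (hn : 0 < n) (a : SCirc n) : dm 0 a = a := by
  by_cases ha : IsBasePt a
  · exact dm_base 0 ha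
  · rw [dm_eq hn 0 ha, Nat.sub_zero, min_eq_left (idx_le ha), pt_idx hn ha]

theorem dm_step_even {n : ℕ} (hn : 0 < n) {k : ℕ} (hk : k % 2 = 0) {a : SCirc n}
    (ha : ¬IsBasePt a) : SCirc.le (dm k a) (dm (k + 1) a) := by
  rw [dm_eq hn k ha, dm_eq hn (k + 1) ha]
  apply le_pt_pt hn (by have := idx_le ha; omega)
  omega

theorem dm_step_odd {n : ℕ} (hn : 0 < n) {k : ℕ} (hk : k % 2 = 1) {a : SCirc n}
    (ha : ¬IsBasePt a) : SCirc.le (dm (k + 1) a) (dm k a) := by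
  rw [dm_eq hn k ha, dm_eq hn (k + 1) ha]
  apply le_pt_pt hn (by have := idx_le ha; omega)
  omega

theorem dm_large {n : ℕ} (hn : 0 < n) {k : ℕ} (hk : 2 * n - 2 ≤ k) {a : SCirc n}
    (ha : ¬IsBasePt a) : dm k a = pt hn 0 := by
  rw [dm_eq hn k ha]
  congr 1
  omega

theorem le_pt_zero_y {n : ℕ} (hn : 0 < n) :
    SCirc.le (pt hn 0) (Sum.inr (⟨0, hn⟩ : Fin n)) := by
  simp only [pt, if_pos (by norm_num : 0 % 2 = 0)]
  left
  exact Fin.ext (by simp)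

end SCirc
section Wedge

variable {m : ℕ} {f : Fin m → ℕ}

instance (n : ℕ) : Finite (SCirc n) := inferInstanceAs (Finite (Fin n ⊕ Fin n))
instance : Finite (WedgeSCirc m f) := Quot.finite _

theorem wedgeRel_equiv : Equivalence (wedgeRel m f) := by
  constructor
  · exact fun a => Or.inl rfl
  · rintro a b (rfl | ⟨h1, h2⟩)
    · exact Or.inl rfl
    · exact Or.inr ⟨h2, h1⟩
  · rintro a b c (rfl | ⟨h1, h2⟩) (rfl | ⟨h3, h4⟩)
    · exact Or.inl rfl
    · exact Or.inr ⟨h3, h4⟩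
    · exact Or.inr ⟨h1, h2⟩
    · exact Or.inr ⟨h1, h4⟩

theorem wedge_mk_eq_iff {a b : Σ i : Fin m, SCirc (f i)} :
    (Quot.mk _ a : WedgeSCirc m f) = Quot.mk _ b ↔ wedgeRel m f a b := by
  rw [Quot.eq, wedgeRel_equiv.eqvGen_iff]

theorem isOpen_wedge_iff {U : Set (WedgeSCirc m f)} :
    IsOpen U ↔ ∀ (i : Fin m) (a b : SCirc (f i)),
      (Quot.mk _ ⟨i, a⟩ : WedgeSCirc m f) ∈ U → SCirc.le b a →
      (Quot.mk _ ⟨i, b⟩ : WedgeSCirc m f) ∈ U := by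
  rw [← isQuotientMap_quot_mk.isOpen_preimage, isOpen_sigma_iff]
  constructor
  · intro h i a b ha hle
    exact h i (⟨i, a⟩ : Σ i, SCirc (f i)).2 ha b hle
  · intro h i
    exact fun a ha b hle => h i a b ha hle

theorem spec_of_le {i : Fin m} {b a : SCirc (f i)} (h : SCirc.le b a) :
    (Quot.mk _ ⟨i, b⟩ : WedgeSCirc m f) ⤳ Quot.mk _ ⟨i, a⟩ := by
  rw [specializes_iff_forall_open]
  intro U hU ha
  exact isOpen_wedge_iff.mp hU i a b ha h

/-- The `k`-th stage of the deformation, on the wedge. -/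
def DM (m : ℕ) (f : Fin m → ℕ) (k : ℕ) : WedgeSCirc m f → WedgeSCirc m f :=
  Quot.lift (fun a => Quot.mk _ ⟨a.1, SCirc.dm k a.2⟩) (by
    rintro a b (rfl | ⟨h1, h2⟩)
    · rfl
    · apply Quot.sound
      exact Or.inr ⟨by rw [SCirc.dm_base k h1]; exact h1, by rw [SCirc.dm_base k h2]; exact h2⟩)

theorem DM_mk (k : ℕ) (a : Σ i : Fin m, SCirc (f i)) :
    DM m f k (Quot.mk _ a) = Quot.mk _ ⟨a.1, SCirc.dm k a.2⟩ := rfl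

end Wedge
section Main

variable {m : ℕ} {f : Fin m → ℕ}

theorem mk_eq_basePt_iff {i₀ : Fin m} {a₀ : SCirc (f i₀)} (h₀ : IsBasePt a₀)
    {i : Fin m} {a : SCirc (f i)} :
    (Quot.mk _ ⟨i, a⟩ : WedgeSCirc m f) = Quot.mk _ ⟨i₀, a₀⟩ ↔ IsBasePt a := by
  rw [wedge_mk_eq_iff]
  constructor
  · rintro (h | ⟨h1, h2⟩)
    · obtain ⟨h1, h2⟩ := Sigma.mk.inj_iff.mp h
      subst h1
      rw [eq_of_heq h2]
      exact h₀
    · exact h1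
  · intro ha
    exact Or.inr ⟨ha, h₀⟩

theorem not_basePt_of_ne {i₀ : Fin m} {a₀ : SCirc (f i₀)} (h₀ : IsBasePt a₀)
    {i : Fin m} {a b : SCirc (f i)}
    (hne : (Quot.mk _ ⟨i, a⟩ : WedgeSCirc m f) ≠ Quot.mk _ ⟨i₀, a₀⟩)
    (hle : SCirc.le b a) : ¬IsBasePt a ∧ ¬IsBasePt b := by
  have ha : ¬IsBasePt a := fun h => hne ((mk_eq_basePt_iff h₀).mpr h)
  refine ⟨ha, fun h => ?_⟩
  obtain ⟨j, rfl, hj⟩ := h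
  exact ha ((SCirc.eq_of_le_inr hle) ▸ ⟨j, rfl, hj⟩)

theorem isOpen_compl_basePt {i₀ : Fin m} {a₀ : SCirc (f i₀)} (h₀ : IsBasePt a₀) :
    IsOpen ({Quot.mk _ ⟨i₀, a₀⟩}ᶜ : Set (WedgeSCirc m f)) := by
  rw [isOpen_wedge_iff]
  intro i a b ha hle
  have h := not_basePt_of_ne h₀ ha hle
  exact fun hb => h.2 ((mk_eq_basePt_iff h₀).mp hb)

theorem continuous_DM_compl (k : ℕ) {i₀ : Fin m} {a₀ : SCirc (f i₀)} (h₀ : IsBasePt a₀)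
    (hf : ∀ i, 2 ≤ f i) :
    Continuous (fun q : ({Quot.mk _ ⟨i₀, a₀⟩}ᶜ : Set (WedgeSCirc m f)) => DM m f k q.1) := by
  rw [continuous_def]
  intro U hU
  rw [isOpen_induced_iff]
  refine ⟨{z | z ≠ Quot.mk _ ⟨i₀, a₀⟩ ∧ DM m f k z ∈ U}, ?_, ?_⟩
  · rw [isOpen_wedge_iff]
    rintro i a b ⟨hne, hmem⟩ hle
    have hn : 0 < f i := by have := hf i; omega
    obtain ⟨ha, hb⟩ := not_basePt_of_ne h₀ hne hle
    refine ⟨fun h => hb ((mk_eq_basePt_iff h₀).mp h), ?_⟩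
    rw [DM_mk] at hmem ⊢
    exact isOpen_wedge_iff.mp hU i _ _ hmem (SCirc.dm_mono hn k ha hle)
  · ext q
    have hq : q.1 ≠ Quot.mk _ ⟨i₀, a₀⟩ := q.2
    simp [hq]

variable (f) in
/-- The `k`-th stage of the deformation, as a continuous map on the punctured wedge. -/
def CK (k : ℕ) {i₀ : Fin m} {a₀ : SCirc (f i₀)} (h₀ : IsBasePt a₀) (hf : ∀ i, 2 ≤ f i) :
    C(({Quot.mk _ ⟨i₀, a₀⟩}ᶜ : Set (WedgeSCirc m f)), WedgeSCirc m f) :=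
  ⟨fun q => DM m f k q.1, continuous_DM_compl k h₀ hf⟩

theorem exists_rep_compl {i₀ : Fin m} {a₀ : SCirc (f i₀)} (h₀ : IsBasePt a₀)
    (q : ({Quot.mk _ ⟨i₀, a₀⟩}ᶜ : Set (WedgeSCirc m f))) :
    ∃ a : Σ i : Fin m, SCirc (f i), Quot.mk _ a = q.1 ∧ ¬IsBasePt a.2 := by
  obtain ⟨a, ha⟩ := Quot.exists_rep q.1
  refine ⟨a, ha, fun h => ?_⟩
  have hq : q.1 ≠ Quot.mk _ ⟨i₀, a₀⟩ := q.2
  exact hq (ha ▸ (mk_eq_basePt_iff (a := a.2) h₀).mpr h)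

theorem homotopic_CK_succ (k : ℕ) {i₀ : Fin m} {a₀ : SCirc (f i₀)} (h₀ : IsBasePt a₀)
    (hf : ∀ i, 2 ≤ f i) : (CK f k h₀ hf).Homotopic (CK f (k + 1) h₀ hf) := by
  rcases Nat.even_or_odd k with hk | hk
  · apply homotopic_of_specializes
    intro q
    obtain ⟨a, ha, hab⟩ := exists_rep_compl h₀ q
    have hn : 0 < f a.1 := by have := hf a.1; omega
    show DM m f k q.1 ⤳ DM m f (k + 1) q.1
    rw [← ha, DM_mk, DM_mk]
    exact spec_of_le (SCirc.dm_step_even hn (Nat.even_iff.mp hk) hab)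
  · refine (homotopic_of_specializes _ _ fun q => ?_).symm
    obtain ⟨a, ha, hab⟩ := exists_rep_compl h₀ q
    have hn : 0 < f a.1 := by have := hf a.1; omega
    show DM m f (k + 1) q.1 ⤳ DM m f k q.1
    rw [← ha, DM_mk, DM_mk]
    exact spec_of_le (SCirc.dm_step_odd hn (Nat.odd_iff.mp hk) hab)

theorem homotopic_CK (K : ℕ) {i₀ : Fin m} {a₀ : SCirc (f i₀)} (h₀ : IsBasePt a₀)
    (hf : ∀ i, 2 ≤ f i) : (CK f 0 h₀ hf).Homotopic (CK f K h₀ hf) := by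
  induction K with
  | zero => exact ContinuousMap.Homotopic.refl _
  | succ k ih => exact ih.trans (homotopic_CK_succ k h₀ hf)

theorem nullhomotopic_incl_compl {i₀ : Fin m} {a₀ : SCirc (f i₀)} (h₀ : IsBasePt a₀)
    (hf : ∀ i, 2 ≤ f i) :
    ContinuousMap.Nullhomotopic
      (⟨Subtype.val, continuous_subtype_val⟩ :
        C(({Quot.mk _ ⟨i₀, a₀⟩}ᶜ : Set (WedgeSCirc m f)), WedgeSCirc m f)) := by
  set P : WedgeSCirc m f := Quot.mk _ ⟨i₀, a₀⟩ with hP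
  refine ⟨P, ?_⟩
  set K := 2 * Finset.univ.sup f with hK
  have h1 : (⟨Subtype.val, continuous_subtype_val⟩ :
      C(({P}ᶜ : Set (WedgeSCirc m f)), WedgeSCirc m f)) = CK f 0 h₀ hf := by
    apply ContinuousMap.ext
    intro q
    obtain ⟨a, ha, hab⟩ := exists_rep_compl h₀ q
    have hn : 0 < f a.1 := by have := hf a.1; omega
    show q.1 = DM m f 0 q.1
    rw [← ha, DM_mk, SCirc.dm_zero hn]
  rw [h1]
  refine (homotopic_CK K h₀ hf).trans (homotopic_of_specializes _ _ fun q => ?_)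
  obtain ⟨a, ha, hab⟩ := exists_rep_compl h₀ q
  have hn : 0 < f a.1 := by have := hf a.1; omega
  show DM m f K q.1 ⤳ P
  rw [← ha, DM_mk, SCirc.dm_large hn (by
    have : f a.1 ≤ Finset.univ.sup f := Finset.le_sup (Finset.mem_univ a.1)
    omega) hab]
  have he : (Quot.mk _ ⟨a.1, (Sum.inr ⟨0, hn⟩ : SCirc (f a.1))⟩ : WedgeSCirc m f) = P := by
    rw [hP]
    exact (mk_eq_basePt_iff h₀).mpr ⟨⟨0, hn⟩, rfl, rfl⟩
  rw [← he]
  exact spec_of_le (SCirc.le_pt_zero_y hn)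

end Main

/-- Let `⋁_{i=1}^m 𝕊¹_{n_i}`, with each `n_i ≥ 2`, be the wedge of
`m` finite models of the circle, formed by identifying the points `y_0` of all
factors to a single point `y_0`.  Then `cat(⋁_{i=1}^m 𝕊¹_{n_i}) ≤ 2`; explicitly,
the minimal open neighbourhood `Q₁` of the wedge point `y_0` and the complement `Q₂`
of `{y_0}` form an open cover by two sets whose inclusions are nullhomotopic. -/
theorem lsCat_wedge_scirc_le_two (m : ℕ) (hm : 0 < m) (f : Fin m → ℕ)
    (hf : ∀ i, 2 ≤ f i) :
    let p : WedgeSCirc m f :=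
      Quot.mk _ ⟨⟨0, hm⟩, SCirc.y ⟨0, by have := hf ⟨0, hm⟩; omega⟩⟩
    let Q₁ : Set (WedgeSCirc m f) := ⋂₀ {U | IsOpen U ∧ p ∈ U}
    let Q₂ : Set (WedgeSCirc m f) := {p}ᶜ
    (IsOpen Q₁ ∧ IsOpen Q₂ ∧ Q₁ ∪ Q₂ = Set.univ ∧
      ContinuousMap.Nullhomotopic
        (⟨Subtype.val, continuous_subtype_val⟩ : C(Q₁, WedgeSCirc m f)) ∧
      ContinuousMap.Nullhomotopic
        (⟨Subtype.val, continuous_subtype_val⟩ : C(Q₂, WedgeSCirc m f))) ∧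
    lsCat (WedgeSCirc m f) ≤ 2 := by
  intro p Q₁ Q₂
  have h₀ : IsBasePt (SCirc.y (⟨0, by have := hf ⟨0, hm⟩; omega⟩ : Fin (f ⟨0, hm⟩))) :=
    ⟨_, rfl, rfl⟩
  have hQ1 : IsOpen Q₁ := Set.Finite.isOpen_sInter (Set.toFinite _) (fun t ht => ht.1)
  have hQ2 : IsOpen Q₂ := isOpen_compl_basePt h₀
  have hcov : Q₁ ∪ Q₂ = Set.univ := by
    rw [Set.eq_univ_iff_forall]
    intro z
    by_cases hz : z = p
    · left
      subst hz
      exact Set.mem_sInter.mpr fun U hU => hU.2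
    · exact Or.inr hz
  have hN1 : ContinuousMap.Nullhomotopic
      (⟨Subtype.val, continuous_subtype_val⟩ : C(Q₁, WedgeSCirc m f)) := by
    refine ⟨p, homotopic_of_specializes _ _ fun q => ?_⟩
    rw [specializes_iff_forall_open]
    intro U hU hpU
    exact Set.mem_sInter.mp q.2 U ⟨hU, hpU⟩
  have hN2 : ContinuousMap.Nullhomotopic
      (⟨Subtype.val, continuous_subtype_val⟩ : C(Q₂, WedgeSCirc m f)) :=
    nullhomotopic_incl_compl h₀ hf
  refine ⟨⟨hQ1, hQ2, hcov, hN1, hN2⟩, Nat.sInf_le ?_⟩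
  refine ⟨![Q₁, Q₂], fun i => ?_, ?_, fun i => ?_⟩
  · fin_cases i
    · exact hQ1
    · exact hQ2
  · rw [Set.eq_univ_iff_forall]
    intro z
    rw [Set.mem_iUnion]
    rcases (hcov ▸ Set.mem_univ z : z ∈ Q₁ ∪ Q₂) with h | h
    · exact ⟨0, h⟩
    · exact ⟨1, h⟩
  · fin_cases i
    · exact hN1
    · exact hN2
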